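/- Let n, m be even, and let G = ⟨X, Y, Z | X^n = Z^α, Y^2 = 1, YX = X^{n-1}YZ^γ, YZ = ZY, XZ = ZX, Z^m = 1⟩ satisfy (n/2)(α+γ) ≡ α + m/2 (mod m). Then the abelianization G/[G,G] has order 2m; equivalently, the group of homomorphisms from G to the multiplicative group of a field containing a primitive (2m)-th root of unity has order 2m. -/

import Mathlib

/-- Relations for the central extension of the dihedral group `D_{2n}` by `ℤ/mℤ`
with parameters `(α, β, γ)`: generators `X = 0`, `Y = 1`, `Z = 2`. -/
def grels (n m : ℕ) (α β γ : ℤ) : Set (FreeGroup (Fin 3)) :=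
  { FreeGroup.of (0 : Fin 3) ^ n * (FreeGroup.of (2 : Fin 3) ^ α)⁻¹,
    FreeGroup.of (1 : Fin 3) ^ 2 * (FreeGroup.of (2 : Fin 3) ^ β)⁻¹,
    FreeGroup.of (1 : Fin 3) * FreeGroup.of (0 : Fin 3) *
      (FreeGroup.of (0 : Fin 3) ^ (n - 1) * FreeGroup.of (1 : Fin 3) *
        FreeGroup.of (2 : Fin 3) ^ γ)⁻¹,
    FreeGroup.of (1 : Fin 3) * FreeGroup.of (2 : Fin 3) *
      (FreeGroup.of (2 : Fin 3) * FreeGroup.of (1 : Fin 3))⁻¹,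
    FreeGroup.of (0 : Fin 3) * FreeGroup.of (2 : Fin 3) *
      (FreeGroup.of (2 : Fin 3) * FreeGroup.of (0 : Fin 3))⁻¹,
    FreeGroup.of (2 : Fin 3) ^ m }

/-- The central extension `G(α, β, γ)` of `D_{2n}` by `ℤ/mℤ`. -/
abbrev GG (n m : ℕ) (α β γ : ℤ) : Type := PresentedGroup (grels n m α β γ)

def gX (n m : ℕ) (α β γ : ℤ) : GG n m α β γ := PresentedGroup.of 0
def gY (n m : ℕ) (α β γ : ℤ) : GG n m α β γ := PresentedGroup.of 1
def gZ (n m : ℕ) (α β γ : ℤ) : GG n m α β γ := PresentedGroup.of 2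

lemma pow_val_natCast' {A : Type*} [Group A] {a : A} {d : ℕ} (hd : 0 < d) (h : a ^ d = 1) (k : ℕ) :
    a ^ ((k : ZMod d)).val = a ^ k := by
  haveI : NeZero d := ⟨hd.ne'⟩
  have hdvd : orderOf a ∣ d := orderOf_dvd_of_pow_eq_one h
  rw [ZMod.val_natCast]
  exact pow_eq_pow_iff_modEq.mpr ((Nat.mod_modEq k d).of_dvd hdvd)

lemma card_three_gens {A : Type*} [CommGroup A] (a b c : A) (d₁ d₂ d₃ : ℕ)
    (hd₁ : 0 < d₁) (hd₂ : 0 < d₂) (hd₃ : 0 < d₃)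
    (ha : a ^ d₁ = 1) (hb : b ^ d₂ = 1) (hc : c ^ d₃ = 1)
    (hgen : Subgroup.closure {a, b, c} = ⊤)
    (φ : A →* Multiplicative (ZMod d₁ × ZMod d₂ × ZMod d₃))
    (hφa : φ a = Multiplicative.ofAdd (1, 0, 0))
    (hφb : φ b = Multiplicative.ofAdd (0, 1, 0))
    (hφc : φ c = Multiplicative.ofAdd (0, 0, 1)) :
    Nat.card A = d₁ * d₂ * d₃ := by
  haveI : NeZero d₁ := ⟨hd₁.ne'⟩
  haveI : NeZero d₂ := ⟨hd₂.ne'⟩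
  haveI : NeZero d₃ := ⟨hd₃.ne'⟩
  set ψ : ZMod d₁ × ZMod d₂ × ZMod d₃ → A :=
    fun p => a ^ p.1.val * b ^ p.2.1.val * c ^ p.2.2.val with hψ
  have key : ∀ (x : A) (dd : ℕ), 0 < dd → x ^ dd = 1 → ∀ (u v : ZMod dd),
      x ^ (u + v).val = x ^ u.val * x ^ v.val := by
    intro x dd hdd h1 u v
    haveI : NeZero dd := ⟨hdd.ne'⟩
    have huv : (u + v) = ((u.val + v.val : ℕ) : ZMod dd) := by
      push_cast
      rw [ZMod.natCast_rightInverse u, ZMod.natCast_rightInverse v]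
    rw [huv, pow_val_natCast' hdd h1, pow_add]
  have hmul : ∀ p q, ψ (p + q) = ψ p * ψ q := by
    rintro ⟨p1, p2, p3⟩ ⟨q1, q2, q3⟩
    simp only [hψ, Prod.fst_add, Prod.snd_add,
      key a d₁ hd₁ ha, key b d₂ hd₂ hb, key c d₃ hd₃ hc]
    simp only [mul_assoc, mul_comm, mul_left_comm]
  have hcomp : ∀ p, φ (ψ p) = Multiplicative.ofAdd p := by
    rintro ⟨p1, p2, p3⟩
    simp only [hψ, map_mul, map_pow, hφa, hφb, hφc, ← ofAdd_nsmul, ← ofAdd_add]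
    congr 1
    simp [Prod.ext_iff, nsmul_eq_mul, ZMod.natCast_rightInverse p1,
      ZMod.natCast_rightInverse p2, ZMod.natCast_rightInverse p3]
  have hinj : Function.Injective ψ := by
    intro p q h
    have := congrArg φ h
    rw [hcomp, hcomp] at this
    exact Multiplicative.ofAdd.injective this
  have hga : ψ (1, 0, 0) = a := by
    simp only [hψ]
    rw [show (1 : ZMod d₁) = ((1 : ℕ) : ZMod d₁) by rw [Nat.cast_one],
      pow_val_natCast' hd₁ ha, ZMod.val_zero, ZMod.val_zero]
    simp
  have hgb : ψ (0, 1, 0) = b := by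
    simp only [hψ]
    rw [show (1 : ZMod d₂) = ((1 : ℕ) : ZMod d₂) by rw [Nat.cast_one],
      pow_val_natCast' hd₂ hb, ZMod.val_zero, ZMod.val_zero]
    simp
  have hgc : ψ (0, 0, 1) = c := by
    simp only [hψ]
    rw [show (1 : ZMod d₃) = ((1 : ℕ) : ZMod d₃) by rw [Nat.cast_one],
      pow_val_natCast' hd₃ hc, ZMod.val_zero, ZMod.val_zero]
    simp
  have hsurj : Function.Surjective ψ := by
    intro g
    have hg : g ∈ Subgroup.closure ({a, b, c} : Set A) := hgen ▸ Subgroup.mem_top g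
    induction hg using Subgroup.closure_induction with
    | mem x hx =>
      rcases hx with rfl | rfl | rfl
      · exact ⟨_, hga⟩
      · exact ⟨_, hgb⟩
      · exact ⟨_, hgc⟩
    | one => exact ⟨0, by simp [hψ]⟩
    | mul x y _ _ hx hy =>
      obtain ⟨p, rfl⟩ := hx; obtain ⟨q, rfl⟩ := hy
      exact ⟨p + q, hmul p q⟩
    | inv x _ hx =>
      obtain ⟨p, rfl⟩ := hx
      refine ⟨-p, ?_⟩
      have : ψ (-p) * ψ p = 1 := by rw [← hmul]; simp [hψ]
      exact eq_inv_of_mul_eq_one_left this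
  have := Nat.card_eq_of_bijective ψ ⟨hinj, hsurj⟩
  rw [← this, Nat.card_prod, Nat.card_prod, Nat.card_zmod, Nat.card_zmod, Nat.card_zmod, mul_assoc]

set_option maxHeartbeats 3200000 in
/-- For `n = 2n₂`, `m = 2m₂` even saying `(n/2)(α+γ) ≡ α + m/2 (mod m)`, the
abelianization of `G(α, 0, γ)` has order `2m`. -/
theorem stmt11 (n₂ m₂ : ℕ) (n m : ℕ) (hn : n = 2 * n₂) (hm : m = 2 * m₂)
    (hn3 : 3 ≤ n) (hm1 : 1 ≤ m) (α γ : ℤ)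
    (hreal : (n₂ : ℤ) * (α + γ) ≡ α + (m₂ : ℤ) [ZMOD (m : ℤ)]) :
    Nat.card (Abelianization (GG n m α 0 γ)) = 2 * m := by
  set A := Abelianization (GG n m α 0 γ) with hA
  let q : FreeGroup (Fin 3) →* A := (Abelianization.of).comp (PresentedGroup.mk _)
  have hqone : ∀ r ∈ grels n m α 0 γ, q r = 1 := by
    intro r hr
    have h1 : PresentedGroup.mk (grels n m α 0 γ) r = 1 :=
      (QuotientGroup.eq_one_iff _).mpr (Subgroup.subset_normalClosure hr)
    show Abelianization.of (PresentedGroup.mk (grels n m α 0 γ) r) = 1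
    rw [h1, map_one]
  set x := q (FreeGroup.of 0) with hxd
  set y := q (FreeGroup.of 1) with hyd
  set z := q (FreeGroup.of 2) with hzd
  have hr1 : x ^ n = z ^ α := by
    have := hqone _ (show FreeGroup.of (0 : Fin 3) ^ n * (FreeGroup.of (2 : Fin 3) ^ α)⁻¹ ∈
      grels n m α 0 γ from Set.mem_insert _ _)
    simpa only [map_mul, map_pow, map_zpow, map_inv, mul_inv_eq_one] using this
  have hr2 : y ^ 2 = 1 := by
    have := hqone _ (show FreeGroup.of (1 : Fin 3) ^ 2 * (FreeGroup.of (2 : Fin 3) ^ (0:ℤ))⁻¹ ∈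
      grels n m α 0 γ from Set.mem_insert_iff.mpr (Or.inr (Set.mem_insert _ _)))
    simpa only [map_mul, map_pow, map_zpow, map_inv, zpow_zero, inv_one, mul_one] using this
  have hr3 : y * x = x ^ (n-1) * y * z ^ γ := by
    have := hqone _ (show FreeGroup.of (1 : Fin 3) * FreeGroup.of (0 : Fin 3) *
      (FreeGroup.of (0 : Fin 3) ^ (n - 1) * FreeGroup.of (1 : Fin 3) *
        FreeGroup.of (2 : Fin 3) ^ γ)⁻¹ ∈ grels n m α 0 γ from
      Set.mem_insert_iff.mpr (Or.inr (Set.mem_insert_iff.mpr (Or.inr (Set.mem_insert _ _)))))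
    simpa only [map_mul, map_pow, map_zpow, map_inv, mul_inv_eq_one] using this
  have hr6 : z ^ m = 1 := by
    have := hqone _ (show FreeGroup.of (2 : Fin 3) ^ m ∈ grels n m α 0 γ from
      Set.mem_insert_iff.mpr (Or.inr (Set.mem_insert_iff.mpr (Or.inr (Set.mem_insert_iff.mpr (Or.inr
        (Set.mem_insert_iff.mpr (Or.inr (Set.mem_insert_iff.mpr (Or.inr rfl))))))))))
    simpa only [map_pow] using this
  -- derived facts
  have h3' : x = x ^ (n-1) * z ^ γ := by
    rw [show x ^ (n-1) * y * z ^ γ = y * (x ^ (n-1) * z ^ γ) by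
      rw [mul_comm (x ^ (n-1)) y, mul_assoc]] at hr3
    exact mul_left_cancel hr3
  have hxn2 : x ^ (n-2) = (z ^ γ)⁻¹ := by
    have h : x * 1 = x * (x ^ (n-2) * z ^ γ) := by
      calc x * 1 = x := mul_one x
      _ = x ^ (n-1) * z ^ γ := h3'
      _ = x ^ (n-2) * x * z ^ γ := by rw [← pow_succ, show n-2+1 = n-1 by omega]
      _ = x * (x ^ (n-2) * z ^ γ) := by rw [mul_comm (x ^ (n-2)) x, mul_assoc]
    exact eq_inv_of_mul_eq_one_left ((mul_left_cancel h).symm)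
  have hx2 : x ^ 2 = z ^ (α + γ) := by
    have h : x ^ (n-2) * x ^ 2 = z ^ α := by rw [← pow_add, show n-2+2 = n by omega, hr1]
    rw [hxn2, inv_mul_eq_iff_eq_mul] at h
    rw [h, ← zpow_add, add_comm]
  have hx2' : x ^ (2:ℤ) = z ^ (α + γ) := by
    rw [show (2:ℤ) = ((2:ℕ):ℤ) by norm_num, zpow_natCast, hx2]
  have hzm : z ^ (m : ℤ) = 1 := by rw [zpow_natCast, hr6]
  have hzsa : z ^ ((n₂:ℤ) * (α + γ)) = z ^ α := by
    rw [mul_comm, zpow_mul, ← hx2', ← zpow_mul]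
    rw [show (2:ℤ) * (n₂:ℤ) = ((n:ℕ):ℤ) by push_cast [hn]; ring, zpow_natCast, hr1]
  obtain ⟨k, hk⟩ := hreal.dvd
  have hzm2 : z ^ (m₂ : ℤ) = 1 := by
    have he : (m₂:ℤ) = (n₂:ℤ) * (α + γ) - α + (m:ℤ) * k := by linarith
    rw [he, zpow_add, zpow_sub, hzsa, zpow_mul, hzm, mul_inv_cancel, one_mul, one_zpow]
  have hzm2n : z ^ m₂ = 1 := by rw [← zpow_natCast, hzm2]
  -- generation
  have hqsurj : Function.Surjective q := by
    have hof : Function.Surjective (Abelianization.of (G := GG n m α 0 γ)) := fun a =>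
      QuotientGroup.induction_on a (fun g => ⟨g, rfl⟩)
    exact hof.comp (PresentedGroup.mk_surjective _)
  have hclosure : Subgroup.closure (Set.range fun i => q (FreeGroup.of i)) = ⊤ := by
    rw [show (Set.range fun i => q (FreeGroup.of i)) = q '' (Set.range FreeGroup.of) from
      Set.range_comp q FreeGroup.of, ← MonoidHom.map_closure, FreeGroup.closure_range_of,
      ← MonoidHom.range_eq_map]
    exact MonoidHom.range_eq_top.2 hqsurj
  have htop : ∀ S : Set A, x ∈ Subgroup.closure S → y ∈ Subgroup.closure S →
      z ∈ Subgroup.closure S → Subgroup.closure S = ⊤ := by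
    intro S hxS hyS hzS
    rw [eq_top_iff, ← hclosure]
    refine (Subgroup.closure_le _).mpr ?_
    rintro g ⟨i, rfl⟩
    fin_cases i
    · exact hxS
    · exact hyS
    · exact hzS
  -- values of φ on generators
  have hφof : ∀ (P : Type) [inst : CommGroup P] (vals : Fin 3 → P)
      (hvals : ∀ r ∈ grels n m α 0 γ, FreeGroup.lift vals r = 1) (i : Fin 3),
      (Abelianization.lift (PresentedGroup.toGroup hvals)) (q (FreeGroup.of i)) = vals i := by
    intro P _ vals hvals i
    rw [show q (FreeGroup.of i) = Abelianization.of (PresentedGroup.of i) from rfl,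
      Abelianization.lift_apply_of, PresentedGroup.toGroup.of]
  have hmp : 0 < m₂ := by omega
  have hn' : (n:ℤ) = 2*(n₂:ℤ) := by rw [hn]; push_cast; ring
  have hm' : (m:ℤ) = 2*(m₂:ℤ) := by rw [hm]; push_cast; ring
  rcases Int.even_or_odd (α + γ) with ⟨t, ht⟩ | ⟨t, ht⟩
  · -- even case
    have hc1 : (n:ℤ) * t - α = (m₂:ℤ) * (1 - 2*k) := by
      rw [hn']
      linear_combination (-(n₂:ℤ)) * ht - hk - k * hm'
    have hc1' : ((n:ℕ) : ZMod m₂) * ((t:ℤ) : ZMod m₂) - ((α:ℤ) : ZMod m₂) = 0 := by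
      have h0 : (((n:ℤ) * t - α : ℤ) : ZMod m₂) = 0 := by
        rw [hc1]; push_cast [ZMod.natCast_self]; ring
      push_cast at h0
      linear_combination h0
    have hc2 : (t - γ - ((n:ℤ)-1)*t : ℤ) = (m₂:ℤ) * (2*k - 1) := by
      linear_combination (-(1:ℤ)) * hc1 - ht
    have hc2' : ((t:ℤ) : ZMod m₂) - ((γ:ℤ) : ZMod m₂)
        - (((n-1:ℕ)) : ZMod m₂) * ((t:ℤ) : ZMod m₂) = 0 := by
      have h0 : (((t - γ - ((n:ℤ)-1)*t) : ℤ) : ZMod m₂) = 0 := by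
        rw [hc2]; push_cast [ZMod.natCast_self]; ring
      push_cast [Nat.cast_sub (show 1 ≤ n by omega)] at h0 ⊢
      linear_combination h0
    have hn2 : ((n:ℕ) : ZMod 2) = 0 := by
      rw [hn]; push_cast; rw [show (2:ZMod 2) = 0 by decide]; ring
    have hn12 : ((n-1 : ℕ) : ZMod 2) = 1 := by
      rw [show n-1 = 2*(n₂-1)+1 by omega]; push_cast
      rw [show (2:ZMod 2) = 0 by decide]; ring
    have hm2 : ((m:ℕ) : ZMod m₂) = 0 := by rw [hm]; push_cast [ZMod.natCast_self]; ring
    have hrels : ∀ r ∈ grels n m α 0 γ,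
        FreeGroup.lift (![Multiplicative.ofAdd (0, 1, ((t:ℤ) : ZMod m₂)),
          Multiplicative.ofAdd (1, 0, 0), Multiplicative.ofAdd (0, 0, 1)] :
            Fin 3 → Multiplicative (ZMod 2 × ZMod 2 × ZMod m₂)) r = 1 := by
      intro r hr
      simp only [grels, Set.mem_insert_iff, Set.mem_singleton_iff] at hr
      rcases hr with rfl | rfl | rfl | rfl | rfl | rfl <;>
        simp only [map_mul, map_pow, map_zpow, map_inv, FreeGroup.lift_apply_of,
          Matrix.cons_val_zero, Matrix.cons_val_one, Matrix.head_cons, Matrix.cons_val_two,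
          Matrix.tail_cons] <;>
        (apply Multiplicative.toAdd.injective) <;>
        (apply Prod.ext) <;> (try apply Prod.ext) <;>
        simp [toAdd_mul, toAdd_pow, toAdd_zpow, toAdd_inv]
      · rw [hn2]
      · linear_combination hc1'
      · decide
      · decide
      · rw [hn12]; decide
      · linear_combination hc2'
      · decide
      · decide
      · ring
      · rw [hm2]
    set φ := Abelianization.lift (PresentedGroup.toGroup hrels) with hφd
    have hφx : φ x = Multiplicative.ofAdd (0, 1, ((t:ℤ) : ZMod m₂)) := by
      rw [hxd, hφof _ _ hrels 0]; rfl
    have hφy : φ y = Multiplicative.ofAdd (1, 0, 0) := by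
      rw [hyd, hφof _ _ hrels 1]; rfl
    have hφz : φ z = Multiplicative.ofAdd (0, 0, 1) := by
      rw [hzd, hφof _ _ hrels 2]; rfl
    have hw2 : (x * z ^ (-t)) ^ 2 = 1 := by
      rw [mul_pow, hx2, ← zpow_natCast (z ^ (-t)), ← zpow_mul]
      rw [← zpow_add, show α + γ + (-t) * ((2:ℕ):ℤ) = 0 by push_cast; linarith, zpow_zero]
    have hgen : Subgroup.closure ({y, x * z ^ (-t), z} : Set A) = ⊤ := by
      apply htop
      · have hw : x * z ^ (-t) ∈ Subgroup.closure ({y, x * z ^ (-t), z} : Set A) :=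
          Subgroup.subset_closure (by simp)
        have hz : z ∈ Subgroup.closure ({y, x * z ^ (-t), z} : Set A) :=
          Subgroup.subset_closure (by simp)
        have := mul_mem hw (zpow_mem hz t)
        rwa [mul_assoc, ← zpow_add, neg_add_cancel, zpow_zero, mul_one] at this
      · exact Subgroup.subset_closure (by simp)
      · exact Subgroup.subset_closure (by simp)
    have hφw : φ (x * z ^ (-t)) = Multiplicative.ofAdd (0, 1, 0) := by
      rw [map_mul, map_zpow, hφx, hφz]
      apply Multiplicative.toAdd.injective
      apply Prod.ext
      · simp
      apply Prod.ext
      · simp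
      · simp [toAdd_mul, toAdd_zpow]
    have hcard := card_three_gens y (x * z ^ (-t)) z 2 2 m₂ (by norm_num) (by norm_num) hmp
      hr2 hw2 hzm2n hgen φ hφy hφw hφz
    rw [hcard, hm]; ring
  · -- odd case
    have hz2 : (x * z ^ (-t)) ^ 2 = z := by
      rw [mul_pow, hx2, ← zpow_natCast (z ^ (-t)), ← zpow_mul]
      rw [← zpow_add, show α + γ + (-t) * ((2:ℕ):ℤ) = 1 by push_cast; linarith, zpow_one]
    have hwm : (x * z ^ (-t)) ^ m = 1 := by
      have h2 : (x * z ^ (-t)) ^ (2*m₂) = 1 := by rw [pow_mul, hz2, hzm2n]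
      rwa [← hm] at h2
    have hc1 : (n:ℤ) * (α + γ) - 2*α = (m:ℤ) * (1 - 2*k) := by
      rw [hn']
      linear_combination (-(2:ℤ)) * hk - hm'
    have hc1' : ((n:ℕ) : ZMod m) * ((α:ℤ) : ZMod m) + ((n:ℕ) : ZMod m) * ((γ:ℤ) : ZMod m)
        - ((α:ℤ) : ZMod m) * 2 = 0 := by
      have h0 : (((n:ℤ) * (α + γ) - 2*α : ℤ) : ZMod m) = 0 := by
        rw [hc1]; push_cast [ZMod.natCast_self]; ring
      push_cast at h0 ⊢
      linear_combination h0
    have hc2 : ((α+γ) - 2*γ - ((n:ℤ)-1)*(α+γ) : ℤ) = (m:ℤ) * (2*k - 1) := by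
      linear_combination (-(1:ℤ)) * hc1
    have hc2' : ((α:ℤ) : ZMod m) + ((γ:ℤ) : ZMod m) - ((γ:ℤ) : ZMod m) * 2
        - (((n-1:ℕ)) : ZMod m) * ((γ:ℤ) : ZMod m)
        - (((n-1:ℕ)) : ZMod m) * ((α:ℤ) : ZMod m) = 0 := by
      have h0 : ((((α+γ) - 2*γ - ((n:ℤ)-1)*(α+γ)) : ℤ) : ZMod m) = 0 := by
        rw [hc2]; push_cast [ZMod.natCast_self]; ring
      push_cast [Nat.cast_sub (show 1 ≤ n by omega)] at h0 ⊢
      linear_combination h0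
    have hn2 : ((n:ℕ) : ZMod 2) = 0 := by
      rw [hn]; push_cast; rw [show (2:ZMod 2) = 0 by decide]; ring
    have hn12 : ((n-1 : ℕ) : ZMod 2) = 1 := by
      rw [show n-1 = 2*(n₂-1)+1 by omega]; push_cast
      rw [show (2:ZMod 2) = 0 by decide]; ring
    have hmm : ((m:ℕ) : ZMod m) = 0 := ZMod.natCast_self m
    have hrels : ∀ r ∈ grels n m α 0 γ,
        FreeGroup.lift (![Multiplicative.ofAdd (0, 0, ((α+γ:ℤ) : ZMod m)),
          Multiplicative.ofAdd (1, 0, 0), Multiplicative.ofAdd (0, 0, 2)] :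
            Fin 3 → Multiplicative (ZMod 2 × ZMod 1 × ZMod m)) r = 1 := by
      intro r hr
      simp only [grels, Set.mem_insert_iff, Set.mem_singleton_iff] at hr
      rcases hr with rfl | rfl | rfl | rfl | rfl | rfl <;>
        simp only [map_mul, map_pow, map_zpow, map_inv, FreeGroup.lift_apply_of,
          Matrix.cons_val_zero, Matrix.cons_val_one, Matrix.head_cons, Matrix.cons_val_two,
          Matrix.tail_cons] <;>
        (apply Multiplicative.toAdd.injective) <;>
        (apply Prod.ext) <;> (try apply Prod.ext) <;>
        simp [toAdd_mul, toAdd_pow, toAdd_zpow, toAdd_inv]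
      · linear_combination hc1'
      · decide
      · decide
      · linear_combination hc2'
      · decide
      · ring
    set φ := Abelianization.lift (PresentedGroup.toGroup hrels) with hφd
    have hφx : φ x = Multiplicative.ofAdd (0, 0, ((α+γ:ℤ) : ZMod m)) := by
      rw [hxd, hφof _ _ hrels 0]; rfl
    have hφy : φ y = Multiplicative.ofAdd (1, 0, 0) := by
      rw [hyd, hφof _ _ hrels 1]; rfl
    have hφz : φ z = Multiplicative.ofAdd (0, 0, 2) := by
      rw [hzd, hφof _ _ hrels 2]; rfl
    have hgen : Subgroup.closure ({y, (1:A), x * z ^ (-t)} : Set A) = ⊤ := by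
      have hw : x * z ^ (-t) ∈ Subgroup.closure ({y, (1:A), x * z ^ (-t)} : Set A) :=
        Subgroup.subset_closure (by simp)
      apply htop
      · have hzmem : z ∈ Subgroup.closure ({y, (1:A), x * z ^ (-t)} : Set A) := by
          have h := pow_mem hw 2; rwa [hz2] at h
        have := mul_mem hw (zpow_mem hzmem t)
        rwa [mul_assoc, ← zpow_add, neg_add_cancel, zpow_zero, mul_one] at this
      · exact Subgroup.subset_closure (by simp)
      · have h := pow_mem hw 2; rwa [hz2] at h
    have hφ1 : φ (1:A) = Multiplicative.ofAdd ((0 : ZMod 2), (1 : ZMod 1), (0 : ZMod m)) := by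
      rw [map_one, show ((1:ZMod 1)) = 0 from Subsingleton.elim _ _]
      rfl
    have hφw : φ (x * z ^ (-t)) = Multiplicative.ofAdd (0, 0, 1) := by
      rw [map_mul, map_zpow, hφx, hφz]
      apply Multiplicative.toAdd.injective
      apply Prod.ext
      · simp
      apply Prod.ext
      · simp
      · simp only [toAdd_mul, toAdd_zpow, toAdd_ofAdd]
        show ((α+γ:ℤ) : ZMod m) + (-t) • (2 : ZMod m) = 1
        have h1 : ((α + γ - 2*t : ℤ) : ZMod m) = 1 := by
          rw [show α + γ - 2*t = 1 by linarith]; push_cast; ring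
        rw [zsmul_eq_mul]
        push_cast at h1 ⊢
        linear_combination h1
    have hcard := card_three_gens y (1:A) (x * z ^ (-t)) 2 1 m (by norm_num) (by norm_num)
      (by omega) hr2 (one_pow 1) hwm hgen φ hφy hφ1 hφw
    rw [hcard]
    try ring
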